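/- Let ν = Σ_{i=1}^N α_i δ_{x_i} with α_i > 0 and x_i ∈ S distinct, and let μ be a finite positive Borel measure on S. Then ‖ν − μ‖*_FM = sup over θ ∈ [−1,1]^N of ∫ h_θ d(ν − μ), where h_θ(x) = max(−1, max_{1≤i≤N}(θ_i − d(x_i,x))). -/

import Mathlib

open MeasureTheory

lemma lipschitz_finset_sup' {S ι : Type*} [MetricSpace S] (s : Finset ι) (hs : s.Nonempty)
    (g : ι → S → ℝ) (hg : ∀ i ∈ s, LipschitzWith 1 (g i)) :
    LipschitzWith 1 (fun y => s.sup' hs (fun i => g i y)) := by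
  apply LipschitzWith.of_dist_le_mul
  intro a b
  rw [NNReal.coe_one, one_mul, Real.dist_eq, abs_sub_le_iff]
  constructor
  · rw [sub_le_iff_le_add]
    apply Finset.sup'_le
    intro i hi
    have h1 : g i a - g i b ≤ dist a b := by
      have := (hg i hi).dist_le_mul a b
      rw [NNReal.coe_one, one_mul, Real.dist_eq] at this
      linarith [abs_le.mp this]
    have h2 : g i b ≤ s.sup' hs (fun j => g j b) := Finset.le_sup' (fun j => g j b) hi
    linarith
  · rw [sub_le_iff_le_add]
    apply Finset.sup'_le
    intro i hi
    have h1 : g i b - g i a ≤ dist a b := by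
      have := (hg i hi).dist_le_mul a b
      rw [NNReal.coe_one, one_mul, Real.dist_eq] at this
      linarith [abs_le.mp this]
    have h2 : g i a ≤ s.sup' hs (fun j => g j a) := Finset.le_sup' (fun j => g j a) hi
    linarith

/-- Theorem 2.1 (dimensional reduction via thetas). -/
theorem stmt_3 {S : Type*} [MetricSpace S] [MeasurableSpace S] [BorelSpace S]
    {N : ℕ} (hN : 0 < N) (x : Fin N → S) (hx : Function.Injective x)
    (α : Fin N → ℝ) (hα : ∀ i, 0 < α i)
    (μ : Measure S) [IsFiniteMeasure μ] :
    let ν : Measure S := ∑ i, ENNReal.ofReal (α i) • Measure.dirac (x i)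
    let hθ : (Fin N → ℝ) → S → ℝ := fun θ y =>
      max (-1) (Finset.univ.sup' ⟨⟨0, hN⟩, Finset.mem_univ _⟩
        (fun i => θ i - dist (x i) y))
    sSup {r : ℝ | ∃ f : S → ℝ, LipschitzWith 1 f ∧ (∀ y, |f y| ≤ 1) ∧
        r = ∫ y, f y ∂ν - ∫ y, f y ∂μ}
      = sSup {r : ℝ | ∃ θ : Fin N → ℝ, (∀ i, θ i ∈ Set.Icc (-1 : ℝ) 1) ∧
        r = ∫ y, hθ θ y ∂ν - ∫ y, hθ θ y ∂μ} := by
  intro ν hθ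
  have hne : (Finset.univ : Finset (Fin N)).Nonempty := ⟨⟨0, hN⟩, Finset.mem_univ _⟩
  -- hθ is 1-Lipschitz for any θ
  have hlip : ∀ θ : Fin N → ℝ, LipschitzWith 1 (hθ θ) := by
    intro θ
    have : LipschitzWith 1 (fun y => Finset.univ.sup' hne (fun i => θ i - dist (x i) y)) := by
      apply lipschitz_finset_sup'
      intro i _
      have : LipschitzWith 1 (fun y => dist (x i) y) := LipschitzWith.dist_right (x i)
      have h2 : LipschitzWith 1 (fun y : S => θ i - dist (x i) y) := by
        simpa using (LipschitzWith.const (θ i)).sub this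
      simpa using h2
    have hmax := this.max_const (-1)
    simp only [max_comm] at hmax ⊢
    exact hmax
  -- hθ is bounded by 1 for θ ∈ [-1,1]^N
  have hbdd : ∀ θ : Fin N → ℝ, (∀ i, θ i ∈ Set.Icc (-1 : ℝ) 1) → ∀ y, |hθ θ y| ≤ 1 := by
    intro θ hθmem y
    rw [abs_le]
    constructor
    · exact le_max_left _ _
    · apply max_le (by norm_num)
      apply Finset.sup'_le
      intro i _
      have := (hθmem i).2
      have hd := dist_nonneg (x := x i) (y := y)
      linarith
  -- integrability of bounded measurable functions
  have hint : ∀ (f : S → ℝ) (m : Measure S) [IsFiniteMeasure m], Continuous f → (∀ y, |f y| ≤ 1)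
      → Integrable f m := by
    intro f m _ hc hb
    exact (integrable_const (1:ℝ)).mono' hc.aestronglyMeasurable (ae_of_all _ fun y => by
      simpa using hb y)
  -- ν is a finite measure, integral over ν
  have hνint : ∀ f : S → ℝ, Continuous f → (∀ y, |f y| ≤ 1) →
      ∫ y, f y ∂ν = ∑ i, α i * f (x i) := by
    intro f hc hb
    rw [integral_finset_sum_measure]
    · apply Finset.sum_congr rfl
      intro i _
      rw [integral_smul_measure, integral_dirac' f _ hc.stronglyMeasurable,
        ENNReal.toReal_ofReal (hα i).le]
      rfl
    · intro i _
      apply Integrable.smul_measure (hint f _ hc hb) ENNReal.ofReal_ne_top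
  -- set definitions
  set A := {r : ℝ | ∃ f : S → ℝ, LipschitzWith 1 f ∧ (∀ y, |f y| ≤ 1) ∧
      r = ∫ y, f y ∂ν - ∫ y, f y ∂μ} with hA
  set B := {r : ℝ | ∃ θ : Fin N → ℝ, (∀ i, θ i ∈ Set.Icc (-1 : ℝ) 1) ∧
      r = ∫ y, hθ θ y ∂ν - ∫ y, hθ θ y ∂μ} with hB
  have hBA : B ⊆ A := by
    rintro r ⟨θ, hθmem, rfl⟩
    exact ⟨hθ θ, hlip θ, hbdd θ hθmem, rfl⟩
  have hAbdd : BddAbove A := by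
    refine ⟨(∑ i, α i) + (μ Set.univ).toReal, ?_⟩
    rintro r ⟨f, hf, hb, rfl⟩
    have h1 : ∫ y, f y ∂ν ≤ ∑ i, α i := by
      rw [hνint f hf.continuous hb]
      apply Finset.sum_le_sum
      intro i _
      calc α i * f (x i) ≤ α i * 1 := by
            exact mul_le_mul_of_nonneg_left (abs_le.mp (hb (x i))).2 (hα i).le
        _ = α i := mul_one _
    have h2 : -(μ Set.univ).toReal ≤ ∫ y, f y ∂μ := by
      have : ∫ y, (-1 : ℝ) ∂μ ≤ ∫ y, f y ∂μ := by
        apply integral_mono (integrable_const _) (hint f μ hf.continuous hb)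
        intro y; exact (abs_le.mp (hb y)).1
      simpa [integral_const, smul_eq_mul, measureReal_def] using this
    linarith
  have hBne : B.Nonempty := by
    refine ⟨_, fun _ => 0, fun i => by simp, rfl⟩
  have hAne : A.Nonempty := hBne.mono hBA
  apply le_antisymm
  · apply csSup_le hAne
    rintro r ⟨f, hf, hb, rfl⟩
    -- take θ i = f (x i)
    set θ := fun i => f (x i) with hθdef
    have hθmem : ∀ i, θ i ∈ Set.Icc (-1 : ℝ) 1 := fun i => abs_le.mp (hb (x i))
    have hle : ∀ y, hθ θ y ≤ f y := by
      intro y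
      apply max_le (abs_le.mp (hb y)).1
      apply Finset.sup'_le
      intro i _
      have := hf.dist_le_mul (x i) y
      rw [NNReal.coe_one, one_mul, Real.dist_eq] at this
      have := (abs_le.mp this).2
      simp only [hθdef]
      linarith
    have heq : ∀ i, hθ θ (x i) = f (x i) := by
      intro i
      apply le_antisymm (hle (x i))
      calc f (x i) = θ i - dist (x i) (x i) := by simp [hθdef]
        _ ≤ Finset.univ.sup' hne (fun j => θ j - dist (x j) (x i)) :=
            Finset.le_sup' (fun j => θ j - dist (x j) (x i)) (Finset.mem_univ i)
        _ ≤ hθ θ (x i) := le_max_right _ _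
    have hνeq : ∫ y, hθ θ y ∂ν = ∫ y, f y ∂ν := by
      rw [hνint _ (hlip θ).continuous (hbdd θ hθmem), hνint f hf.continuous hb]
      exact Finset.sum_congr rfl fun i _ => by rw [heq i]
    have hμle : ∫ y, hθ θ y ∂μ ≤ ∫ y, f y ∂μ := by
      apply integral_mono (hint _ μ (hlip θ).continuous (hbdd θ hθmem))
        (hint f μ hf.continuous hb) hle
    have hmem : (∫ y, hθ θ y ∂ν - ∫ y, hθ θ y ∂μ) ∈ B := ⟨θ, hθmem, rfl⟩
    calc ∫ y, f y ∂ν - ∫ y, f y ∂μ ≤ ∫ y, hθ θ y ∂ν - ∫ y, hθ θ y ∂μ := by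
          rw [hνeq]; linarith
      _ ≤ sSup B := le_csSup (hAbdd.mono hBA) hmem
  · exact csSup_le_csSup hAbdd hBne hBA
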